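/- Let ω : ℝ → ℝ³ be continuously differentiable, set Ω(t) = [ω(t)]×, and let R : ℝ → SO(3) be differentiable with dR/dt = R(t)Ω(t). Define the 9×9 block matrix A(t) = [[0, I₃, 0], [0, 0, −R(t)], [0, 0, 0]] and the 9×3 block column γ₁(t) = (0; 0; −R(t)ᵀ), which equals 𝒪(t)⁻¹(0; 0; I₃) for the observability matrix 𝒪(t) = diag(I₃, I₃, −R(t)). Then the recursion γ₂ = Aγ₁ − (d/dt)γ₁, γ₃ = Aγ₂ − (d/dt)γ₂ yields γ₂(t) = (0; I₃; −Ω(t)R(t)ᵀ) and γ₃(t) = (I₃; R(t)Ω(t)R(t)ᵀ; −(Ω(t)² − Ω̇(t))R(t)ᵀ). Equivalently, the inverse of the canonical-form diffeomorphism is the block matrix Υ(t)⁻¹ = [γ₁, γ₂, γ₃] = [[0, 0, I₃], [0, I₃, RΩRᵀ], [−Rᵀ, −ΩRᵀ, −(Ω² − Ω̇)Rᵀ]]. -/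

import Mathlib

open Matrix Filter Real Topology

noncomputable section

/-- `M ⪯ 0`: a real matrix is negative semidefinite iff `-M` is positive semidefinite. -/
def Matrix.NegSemidef {n : Type*} [Fintype n] (M : Matrix n n ℝ) : Prop := (-M).PosSemidef

/-- `M ≺ 0`: a real matrix is negative definite iff `-M` is positive definite. -/
def Matrix.NegDef {n : Type*} [Fintype n] (M : Matrix n n ℝ) : Prop := (-M).PosDef

/-- ℝ³ with the Euclidean norm. -/
abbrev E3 := EuclideanSpace ℝ (Fin 3)

/-- 3×3 real matrices. -/
abbrev M3 := Matrix (Fin 3) (Fin 3) ℝ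

/-- Index type used for 9-dimensional block vectors/matrices with 3×3 blocks. -/
abbrev I9 := Fin 3 ⊕ (Fin 3 ⊕ Fin 3)

/-- `R ∈ SO(3)`, i.e. `RᵀR = I₃` and `det R = 1`. -/
def SO3 (R : M3) : Prop := Rᵀ * R = 1 ∧ R.det = 1

/-- The skew-symmetric matrix `[w]ₓ` with `[w]ₓ u = w × u`. -/
def skew (w : E3) : M3 :=
  !![0, -w 2, w 1; w 2, 0, -w 0; -w 1, w 0, 0]

/-- 9×9 block matrix built from nine 3×3 blocks. -/
def blk3 (a b c d e f g h i : M3) : Matrix I9 I9 ℝ :=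
  Matrix.of fun x y =>
    match x, y with
    | .inl x, .inl y => a x y
    | .inl x, .inr (.inl y) => b x y
    | .inl x, .inr (.inr y) => c x y
    | .inr (.inl x), .inl y => d x y
    | .inr (.inl x), .inr (.inl y) => e x y
    | .inr (.inl x), .inr (.inr y) => f x y
    | .inr (.inr x), .inl y => g x y
    | .inr (.inr x), .inr (.inl y) => h x y
    | .inr (.inr x), .inr (.inr y) => i x y

/-- 3×9 block row matrix built from three 3×3 blocks. -/
def rowblk (a b c : M3) : Matrix (Fin 3) I9 ℝ :=
  Matrix.of fun x y =>
    match y with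
    | .inl y => a x y
    | .inr (.inl y) => b x y
    | .inr (.inr y) => c x y

/-- 9×3 block column matrix built from three 3×3 blocks. -/
def colblk (a b c : M3) : Matrix I9 (Fin 3) ℝ :=
  Matrix.of fun x y =>
    match x with
    | .inl x => a x y
    | .inr (.inl x) => b x y
    | .inr (.inr x) => c x y

/-- 9×9 matrix assembled from three 9×3 block columns. -/
def cols3 (a b c : Matrix I9 (Fin 3) ℝ) : Matrix I9 I9 ℝ :=
  Matrix.of fun x y =>
    match y with
    | .inl y => a x y
    | .inr (.inl y) => b x y
    | .inr (.inr y) => c x y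

/-- 9×9 matrix assembled from three 3×9 block rows. -/
def rows3 (a b c : Matrix (Fin 3) I9 ℝ) : Matrix I9 I9 ℝ :=
  Matrix.of fun x y =>
    match x with
    | .inl x => a x y
    | .inr (.inl x) => b x y
    | .inr (.inr x) => c x y


section Aux

lemma blk3_mul_colblk (a b c d e f g h i p q r : M3) :
    blk3 a b c d e f g h i * colblk p q r =
      colblk (a*p + b*q + c*r) (d*p + e*q + f*r) (g*p + h*q + i*r) := by
  ext x y
  rcases x with x | x | x <;>
    simp [blk3, colblk, Matrix.mul_apply, Fintype.sum_sum_type, Matrix.add_apply,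
      Finset.sum_add_distrib, add_assoc]

lemma blk3_mul_blk3 (a b c d e f g h i a' b' c' d' e' f' g' h' i' : M3) :
    blk3 a b c d e f g h i * blk3 a' b' c' d' e' f' g' h' i' =
      blk3 (a*a'+b*d'+c*g') (a*b'+b*e'+c*h') (a*c'+b*f'+c*i')
           (d*a'+e*d'+f*g') (d*b'+e*e'+f*h') (d*c'+e*f'+f*i')
           (g*a'+h*d'+i*g') (g*b'+h*e'+i*h') (g*c'+h*f'+i*i') := by
  ext x y
  rcases x with x | x | x <;> rcases y with y | y | y <;>
    simp [blk3, Matrix.mul_apply, Fintype.sum_sum_type, Matrix.add_apply,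
      Finset.sum_add_distrib, add_assoc]

lemma blk3_one : blk3 1 0 0 0 1 0 0 0 1 = (1 : Matrix I9 I9 ℝ) := by
  ext x y
  rcases x with x | x | x <;> rcases y with y | y | y <;>
    simp [blk3, Matrix.one_apply]

lemma cols3_colblk (a b c d e f g h i : M3) :
    cols3 (colblk a b c) (colblk d e f) (colblk g h i) = blk3 a d g b e h c f i := by
  ext x y
  rcases x with x | x | x <;> rcases y with y | y | y <;> rfl

lemma colblk_sub (a b c d e f : M3) :
    colblk a b c - colblk d e f = colblk (a - d) (b - e) (c - f) := by
  ext x y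
  rcases x with x | x | x <;> rfl

lemma skew_transpose (w : E3) : (skew w)ᵀ = -(skew w) := by
  ext i j
  fin_cases i <;> fin_cases j <;> simp [skew]

lemma hasDerivAt_proj {ω ω' : ℝ → E3} (hω : ∀ t, HasDerivAt ω (ω' t) t) (t : ℝ) (i : Fin 3) :
    HasDerivAt (fun τ => ω τ i) (ω' t i) t := by
  have := (EuclideanSpace.proj (𝕜 := ℝ) i).hasFDerivAt.comp_hasDerivAt t (hω t)
  simp at this; exact this

lemma hasDerivAt_skew {ω ω' : ℝ → E3} (hω : ∀ t, HasDerivAt ω (ω' t) t) (t : ℝ) (i j : Fin 3) :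
    HasDerivAt (fun τ => skew (ω τ) i j) (skew (ω' t) i j) t := by
  fin_cases i <;> fin_cases j <;> simp only [skew, Matrix.cons_val', Matrix.cons_val_zero,
      Matrix.cons_val_one, Matrix.head_cons, Matrix.empty_val', Matrix.cons_val_fin_one,
      Matrix.head_fin_const, Matrix.cons_val_two, Matrix.tail_cons] <;>
    first
      | exact hasDerivAt_const _ _
      | exact hasDerivAt_proj hω t _
      | exact (hasDerivAt_proj hω t _).neg

lemma hasDerivAt_matrix_mul {A B : ℝ → M3} {A' B' : M3} {t : ℝ}
    (hA : ∀ i j, HasDerivAt (fun τ => A τ i j) (A' i j) t)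
    (hB : ∀ i j, HasDerivAt (fun τ => B τ i j) (B' i j) t)
    (i j : Fin 3) :
    HasDerivAt (fun τ => (A τ * B τ) i j) ((A' * B t + A t * B') i j) t := by
  have h : HasDerivAt (fun τ => ∑ k, A τ i k * B τ k j)
      (∑ k, (A' i k * B t k j + A t i k * B' k j)) t :=
    HasDerivAt.fun_sum fun k _ => (hA i k).mul (hB k j)
  simpa [Matrix.mul_apply, Matrix.add_apply, Finset.sum_add_distrib] using h

end Aux

/-- With `Ω = [ω]ₓ`, `Ṙ = RΩ`, `A(t) = [[0,I₃,0],[0,0,−R(t)],[0,0,0]]`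
and `γ₁(t) = (0;0;−R(t)ᵀ) = 𝒪(t)⁻¹(0;0;I₃)` for `𝒪(t) = diag(I₃,I₃,−R(t))`, the recursion
`γ_{i+1} = Aγᵢ − γ̇ᵢ` yields `γ₂ = (0;I₃;−ΩRᵀ)` and `γ₃ = (I₃;RΩRᵀ;−(Ω²−Ω̇)Rᵀ)`;
equivalently `Υ(t)⁻¹ = [γ₁,γ₂,γ₃] = [[0,0,I₃],[0,I₃,RΩRᵀ],[−Rᵀ,−ΩRᵀ,−(Ω²−Ω̇)Rᵀ]]`. -/
theorem stmt_11 (ω ω' : ℝ → E3) (hω : ∀ t, HasDerivAt ω (ω' t) t) (hω' : Continuous ω')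
    (R : ℝ → M3) (hSO : ∀ t, SO3 (R t))
    (hR : ∀ t i j, HasDerivAt (fun s => R s i j) ((R t * skew (ω t)) i j) t) :
    ∀ t : ℝ,
      let A : ℝ → Matrix I9 I9 ℝ := fun s => blk3 0 1 0 0 0 (-(R s)) 0 0 0
      let 𝒪 : ℝ → Matrix I9 I9 ℝ := fun s => blk3 1 0 0 0 1 0 0 0 (-(R s))
      let γ₁ : ℝ → Matrix I9 (Fin 3) ℝ := fun s => colblk 0 0 (-(R s)ᵀ)
      let γ₂ : ℝ → Matrix I9 (Fin 3) ℝ := fun s =>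
        A s * γ₁ s - Matrix.of fun i j => deriv (fun τ => γ₁ τ i j) s
      let γ₃ : ℝ → Matrix I9 (Fin 3) ℝ := fun s =>
        A s * γ₂ s - Matrix.of fun i j => deriv (fun τ => γ₂ τ i j) s
      γ₁ t = (𝒪 t)⁻¹ * colblk 0 0 1 ∧
      γ₂ t = colblk 0 1 (-(skew (ω t) * (R t)ᵀ)) ∧
      γ₃ t = colblk 1 (R t * skew (ω t) * (R t)ᵀ)
          (-((skew (ω t) * skew (ω t) - skew (ω' t)) * (R t)ᵀ)) ∧
      cols3 (γ₁ t) (γ₂ t) (γ₃ t) =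
        blk3 0 0 1
             0 1 (R t * skew (ω t) * (R t)ᵀ)
             (-(R t)ᵀ) (-(skew (ω t) * (R t)ᵀ))
             (-((skew (ω t) * skew (ω t) - skew (ω' t)) * (R t)ᵀ)) := by
  intro t A 𝒪 γ₁ γ₂ γ₃
  have hRtR : ∀ s, (R s)ᵀ * R s = 1 := fun s => (hSO s).1
  have hRRt : ∀ s, R s * (R s)ᵀ = 1 := fun s => mul_eq_one_comm.mp (hRtR s)
  have hRT : ∀ s i j, HasDerivAt (fun τ => (R τ)ᵀ i j) ((R s * skew (ω s))ᵀ i j) s := by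
    intro s i j
    exact hR s j i
  -- closed form for γ₂
  have hγ2 : ∀ s, γ₂ s = colblk 0 1 (-(skew (ω s) * (R s)ᵀ)) := by
    intro s
    have hd : (Matrix.of fun i j => deriv (fun τ => γ₁ τ i j) s) =
        colblk 0 0 (-((R s * skew (ω s))ᵀ)) := by
      ext x y
      rcases x with x | x | x
      · exact deriv_const s ((0 : M3) x y)
      · exact deriv_const s ((0 : M3) x y)
      · exact ((hR s y x).neg).deriv
    have hA1 : A s * γ₁ s = colblk 0 1 0 := by
      show blk3 0 1 0 0 0 (-(R s)) 0 0 0 * colblk 0 0 (-(R s)ᵀ) = colblk 0 1 0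
      rw [blk3_mul_colblk]
      congr 1 <;> simp [Matrix.neg_mul, Matrix.mul_neg, hRRt s]
    have key : (0 : M3) - -((R s * skew (ω s))ᵀ) = -(skew (ω s) * (R s)ᵀ) := by
      rw [Matrix.transpose_mul, skew_transpose]
      noncomm_ring
    show A s * γ₁ s - (Matrix.of fun i j => deriv (fun τ => γ₁ τ i j) s) = _
    rw [hA1, hd, colblk_sub, key, sub_zero, sub_zero]
  -- closed form for γ₃ at t
  have hγ3 : γ₃ t = colblk 1 (R t * skew (ω t) * (R t)ᵀ)
      (-((skew (ω t) * skew (ω t) - skew (ω' t)) * (R t)ᵀ)) := by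
    have hfun : ∀ (i : I9) (j : Fin 3), (fun τ => γ₂ τ i j) =
        fun τ => (colblk 0 1 (-(skew (ω τ) * (R τ)ᵀ)) : Matrix I9 (Fin 3) ℝ) i j := by
      intro i j; funext τ; rw [hγ2 τ]
    have hd : (Matrix.of fun i j => deriv (fun τ => γ₂ τ i j) t) =
        colblk 0 0 (-(skew (ω' t) * (R t)ᵀ + skew (ω t) * (R t * skew (ω t))ᵀ)) := by
      ext x y
      rcases x with x | x | x
      · show deriv (fun τ => γ₂ τ (Sum.inl x) y) t = (0 : M3) x y
        rw [hfun]
        exact deriv_const t ((0 : M3) x y)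
      · show deriv (fun τ => γ₂ τ (Sum.inr (Sum.inl x)) y) t = (0 : M3) x y
        rw [hfun]
        exact deriv_const t ((1 : M3) x y)
      · show deriv (fun τ => γ₂ τ (Sum.inr (Sum.inr x)) y) t =
          (-(skew (ω' t) * (R t)ᵀ + skew (ω t) * (R t * skew (ω t))ᵀ)) x y
        rw [hfun]
        have h1 : HasDerivAt (fun τ => (skew (ω τ) * (R τ)ᵀ) x y)
            ((skew (ω' t) * (R t)ᵀ + skew (ω t) * (R t * skew (ω t))ᵀ) x y) t :=
          hasDerivAt_matrix_mul (fun i j => hasDerivAt_skew hω t i j) (hRT t) x y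
        exact (h1.neg).deriv
    have hA2 : A t * γ₂ t = colblk 1 (R t * skew (ω t) * (R t)ᵀ) 0 := by
      rw [hγ2 t]
      show blk3 0 1 0 0 0 (-(R t)) 0 0 0 * colblk 0 1 (-(skew (ω t) * (R t)ᵀ)) = _
      rw [blk3_mul_colblk]
      congr 1 <;> simp [Matrix.neg_mul, Matrix.mul_neg, Matrix.mul_assoc]
    have key : (0 : M3) - -(skew (ω' t) * (R t)ᵀ + skew (ω t) * (R t * skew (ω t))ᵀ) =
        -((skew (ω t) * skew (ω t) - skew (ω' t)) * (R t)ᵀ) := by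
      rw [Matrix.transpose_mul, skew_transpose]
      noncomm_ring
    show A t * γ₂ t - (Matrix.of fun i j => deriv (fun τ => γ₂ τ i j) t) = _
    rw [hA2, hd, colblk_sub, key, sub_zero, sub_zero]
  refine ⟨?_, hγ2 t, hγ3, ?_⟩
  · have hinv : (𝒪 t)⁻¹ = blk3 1 0 0 0 1 0 0 0 (-(R t)ᵀ) := by
      apply Matrix.inv_eq_left_inv
      show blk3 1 0 0 0 1 0 0 0 (-(R t)ᵀ) * blk3 1 0 0 0 1 0 0 0 (-(R t)) = 1
      rw [blk3_mul_blk3, ← blk3_one]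
      congr 1 <;> simp [Matrix.neg_mul, Matrix.mul_neg, hRtR t]
    rw [hinv, blk3_mul_colblk]
    show colblk 0 0 (-(R t)ᵀ) = _
    congr 1 <;> simp
  · rw [hγ2 t, hγ3]
    show cols3 (colblk 0 0 (-(R t)ᵀ)) _ _ = _
    rw [cols3_colblk]
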